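/- arXiv:2108.03210 — 3 statements merged into one kernel-verified Lean document; each statement's English description precedes it below -/
import Mathlib

section
/- There exists a prediction space in which the predictive distribution F takes finitely many values that are continuous, strictly increasing CDFs on a shared support interval, such that F is both probabilistically calibrated and marginally calibrated, yet fails to be threshold calibrated (and hence fails to be auto-calibrated). In particular, joint probabilistic and marginal calibration does not imply auto-calibration. -/
open MeasureTheory ProbabilityTheory

noncomputable section

/-- The cumulative distribution function of a measure `G` on `ℝ`, evaluated at `y`. -/
def cdfAt (G : Measure ℝ) (y : ℝ) : ℝ := (G (Set.Iic y)).toReal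

/-- The left limit `G(y−)` of the CDF of `G` at `y`. -/
def cdfLt (G : Measure ℝ) (y : ℝ) : ℝ := (G (Set.Iio y)).toReal

/-- The lower `α`-quantile `q_α^-(G) = inf {x : G(x) ≥ α}`. -/
def lowerQuantile (G : Measure ℝ) (α : ℝ) : ℝ := sInf {x : ℝ | α ≤ cdfAt G x}

/-- The upper `α`-quantile `q_α^+(G) = sup {x : G(x−) ≤ α}`. -/
def upperQuantile (G : Measure ℝ) (α : ℝ) : ℝ := sSup {x : ℝ | cdfLt G x ≤ α}

variable {Ω : Type*} [MeasurableSpace Ω]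

/-- The (randomized) probability integral transform `Z_F = F(Y−) + U (F(Y) − F(Y−))`. -/
def PIT (F : Ω → Measure ℝ) (Y U : Ω → ℝ) (ω : Ω) : ℝ :=
  cdfLt (F ω) (Y ω) + U ω * (cdfAt (F ω) (Y ω) - cdfLt (F ω) (Y ω))

/-- The uniform distribution on `[0,1]`. -/
def unif01 : Measure ℝ := volume.restrict (Set.Icc (0:ℝ) 1)

/-- A prediction space: a probability space carrying a random probability measure `F` on `ℝ`
(the predictive distribution), an outcome `Y`, and a uniform random variable `U` that is
independent of the σ-algebra generated by `F` and `Y`. -/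
structure IsPredictionSpace (μ : Measure Ω) (F : Ω → Measure ℝ) (Y U : Ω → ℝ) : Prop where
  isProb : IsProbabilityMeasure μ
  probF : ∀ ω, IsProbabilityMeasure (F ω)
  measF : Measurable F
  measY : Measurable Y
  measU : Measurable U
  unifU : μ.map U = unif01
  indepU : Indep (MeasurableSpace.comap U inferInstance)
    (MeasurableSpace.comap F inferInstance ⊔ MeasurableSpace.comap Y inferInstance) μ

/-- `F` is auto-calibrated: `F(y) = Q(Y ≤ y | σ(F))` a.s. for every `y`. -/
def AutoCalibrated (μ : Measure Ω) (F : Ω → Measure ℝ) (Y : Ω → ℝ) : Prop :=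
  ∀ y : ℝ, (fun ω => cdfAt (F ω) y)
    =ᵐ[μ] μ[Set.indicator {ω | Y ω ≤ y} (fun _ => (1:ℝ)) | MeasurableSpace.comap F inferInstance]

/-- `F` is probabilistically calibrated: the PIT is uniform on `[0,1]`. -/
def ProbCalibrated (μ : Measure Ω) (F : Ω → Measure ℝ) (Y U : Ω → ℝ) : Prop :=
  μ.map (PIT F Y U) = unif01

/-- `F` is marginally calibrated: `E[F(y)] = Q(Y ≤ y)` for every `y`. -/
def MargCalibrated (μ : Measure Ω) (F : Ω → Measure ℝ) (Y : Ω → ℝ) : Prop :=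
  ∀ y : ℝ, ∫ ω, cdfAt (F ω) y ∂μ = (μ {ω | Y ω ≤ y}).toReal

/-- `F` is CEP calibrated: `Q(Z_F ≤ α | q_α^-(F)) = α` a.s. for every `α ∈ (0,1)`. -/
def CEPCalibrated (μ : Measure Ω) (F : Ω → Measure ℝ) (Y U : Ω → ℝ) : Prop :=
  ∀ α ∈ Set.Ioo (0:ℝ) 1,
    μ[Set.indicator {ω | PIT F Y U ω ≤ α} (fun _ => (1:ℝ)) |
      MeasurableSpace.comap (fun ω => lowerQuantile (F ω) α) inferInstance]
      =ᵐ[μ] fun _ => α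

/-- `F` is threshold calibrated: `Q(Y ≤ t | F(t)) = F(t)` a.s. for every `t`. -/
def ThreshCalibrated (μ : Measure Ω) (F : Ω → Measure ℝ) (Y : Ω → ℝ) : Prop :=
  ∀ t : ℝ,
    μ[Set.indicator {ω | Y ω ≤ t} (fun _ => (1:ℝ)) |
      MeasurableSpace.comap (fun ω => cdfAt (F ω) t) inferInstance]
      =ᵐ[μ] fun ω => cdfAt (F ω) t

/-- An identification function: measurable, increasing and left-continuous in its
first argument. -/
structure IsIdentificationFunction (V : ℝ → ℝ → ℝ) : Prop where
  meas : Measurable (Function.uncurry V)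
  mono : ∀ y : ℝ, Monotone fun x => V x y
  leftCont : ∀ y x : ℝ, ContinuousWithinAt (fun x => V x y) (Set.Iic x) x

/-- Lower bound `T^-(G) = sup {x : ∫ V(x,y) dG(y) < 0}` of the functional induced by `V`. -/
def Tminus (V : ℝ → ℝ → ℝ) (G : Measure ℝ) : ℝ := sSup {x : ℝ | ∫ y, V x y ∂G < 0}

/-- Upper bound `T^+(G) = inf {x : ∫ V(x,y) dG(y) > 0}` of the functional induced by `V`. -/
def Tplus (V : ℝ → ℝ → ℝ) (G : Measure ℝ) : ℝ := sInf {x : ℝ | 0 < ∫ y, V x y ∂G}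

/-- `V` is of prediction error form `V(x,y) = v(x−y)`. -/
def PredErrorForm (V : ℝ → ℝ → ℝ) : Prop :=
  ∃ v : ℝ → ℝ, Monotone v ∧ (∀ x : ℝ, ContinuousWithinAt v (Set.Iic x) x) ∧
    (∃ r : ℝ, 0 < r ∧ v (-r) < 0 ∧ 0 < v r) ∧ ∀ x y : ℝ, V x y = v (x - y)

/-- `V` is of the form `V(x,y) = x − T(δ_y)` for a singleton-valued functional `T`. -/
def DiracSingletonForm (V : ℝ → ℝ → ℝ) : Prop :=
  (∀ y : ℝ, Tminus V (Measure.dirac y) = Tplus V (Measure.dirac y)) ∧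
  ∀ x y : ℝ, V x y = x - Tminus V (Measure.dirac y)

/-- Assumption (V): `V` induces the functional on a convex class `𝓕₀ ⊇ 𝓕` of probability
measures containing all Dirac measures, and `V` is of prediction error form or of the
form `V(x,y) = x − T(δ_y)` for a singleton-valued `T`. -/
structure AssumptionV (V : ℝ → ℝ → ℝ) (𝓕 : Set (Measure ℝ)) : Prop where
  inducing : ∃ 𝓕₀ : Set (Measure ℝ), 𝓕 ⊆ 𝓕₀ ∧ (∀ G ∈ 𝓕₀, IsProbabilityMeasure G) ∧
    (∀ y : ℝ, Measure.dirac y ∈ 𝓕₀) ∧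
    (∀ G₁ ∈ 𝓕₀, ∀ G₂ ∈ 𝓕₀, ∀ p : ℝ, 0 ≤ p → p ≤ 1 →
      ENNReal.ofReal p • G₁ + ENNReal.ofReal (1 - p) • G₂ ∈ 𝓕₀) ∧
    ∀ G ∈ 𝓕₀, ∀ x : ℝ, Integrable (fun y => V x y) G
  form : PredErrorForm V ∨ DiracSingletonForm V

/-- The pair `(T^-(F), T^+(F))` of the interval-valued functional applied to the
random predictive distribution. -/
def TpairOf (V : ℝ → ℝ → ℝ) (F : Ω → Measure ℝ) (ω : Ω) : ℝ × ℝ :=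
  (Tminus V (F ω), Tplus V (F ω))

/-- Conditional `T`-calibration of the predictive distribution `F`:
`T(L(Y | T(F))) = T(F)` almost surely. -/
def CondTCalibrated (μ : Measure Ω) [IsFiniteMeasure μ] (V : ℝ → ℝ → ℝ)
    (F : Ω → Measure ℝ) (Y : Ω → ℝ) : Prop :=
  ∀ᵐ ω ∂μ,
    Tminus V (condDistrib Y (TpairOf V F) μ (TpairOf V F ω)) = Tminus V (F ω) ∧
    Tplus V (condDistrib Y (TpairOf V F) μ (TpairOf V F ω)) = Tplus V (F ω)

/-- Unconditional `T`-calibration of the predictive distribution `F`. -/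
def UncondTCalibrated (μ : Measure Ω) (V : ℝ → ℝ → ℝ)
    (F : Ω → Measure ℝ) (Y : Ω → ℝ) : Prop :=
  ∀ ε : ℝ, 0 < ε →
    (∫ ω, V (Tplus V (F ω) - ε) (Y ω) ∂μ) ≤ 0 ∧
    0 ≤ ∫ ω, V (Tminus V (F ω) + ε) (Y ω) ∂μ

/-- Unconditional `T`-calibration of a single-valued point forecast `X`. -/
def UncondCalibratedPt (μ : Measure Ω) (V : ℝ → ℝ → ℝ) (X Y : Ω → ℝ) : Prop :=
  ∀ ε : ℝ, 0 < ε →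
    (∫ ω, V (X ω - ε) (Y ω) ∂μ) ≤ 0 ∧ 0 ≤ ∫ ω, V (X ω + ε) (Y ω) ∂μ

/-- The sets defining `T^-(G)` and `T^+(G)` are nonempty and bounded, so that the induced
functional is well defined and finite at `G`. -/
def TWellDefined (V : ℝ → ℝ → ℝ) (G : Measure ℝ) : Prop :=
  {x : ℝ | ∫ y, V x y ∂G < 0}.Nonempty ∧ BddAbove {x : ℝ | ∫ y, V x y ∂G < 0} ∧
  {x : ℝ | 0 < ∫ y, V x y ∂G}.Nonempty ∧ BddBelow {x : ℝ | 0 < ∫ y, V x y ∂G}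

/-- The elementary loss `S_η(x,y) = (1{η ≤ x} − 1{η ≤ y}) V(η,y)`. -/
def elemLoss (V : ℝ → ℝ → ℝ) (η x y : ℝ) : ℝ :=
  ((if η ≤ x then (1:ℝ) else 0) - if η ≤ y then (1:ℝ) else 0) * V η y

/-- `S` has mixture (Choquet) form with respect to the identification function `V`. -/
def MixtureForm (V S : ℝ → ℝ → ℝ) : Prop :=
  ∃ H : Measure ℝ, IsLocallyFiniteMeasure H ∧
    ∀ x y : ℝ, S x y = ∫ η, elemLoss V η x y ∂H

/-- `S` is a canonical loss for the functional induced by `V`. -/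
def IsCanonicalLoss (V S : ℝ → ℝ → ℝ) : Prop :=
  (∀ x y : ℝ, 0 ≤ S x y) ∧
  ∃ a : ℝ, 0 < a ∧ ∃ b : ℝ → ℝ, Measurable b ∧
    ∀ x y : ℝ, S x y = a * (∫ η, elemLoss V η x y) + b y

/-- `S` is a consistent scoring function for the functional induced by `V` on the class `𝓕`. -/
def ConsistentFor (S V : ℝ → ℝ → ℝ) (𝓕 : Set (Measure ℝ)) : Prop :=
  ∀ G ∈ 𝓕, ∀ t ∈ Set.Icc (Tminus V G) (Tplus V G), ∀ x : ℝ,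
    ∫ y, S t y ∂G ≤ ∫ y, S x y ∂G

/-- `S` is a strictly consistent scoring function for the functional induced by `V` on `𝓕`. -/
def StrictlyConsistentFor (S V : ℝ → ℝ → ℝ) (𝓕 : Set (Measure ℝ)) : Prop :=
  ConsistentFor S V 𝓕 ∧
  ∀ G ∈ 𝓕, ∀ t ∈ Set.Icc (Tminus V G) (Tplus V G), ∀ x : ℝ,
    x ∉ Set.Icc (Tminus V G) (Tplus V G) → ∫ y, S t y ∂G < ∫ y, S x y ∂G

/-- The empirical distribution of the outcomes `y i`, `i ∈ s`. -/
def empOn {n : ℕ} (y : Fin n → ℝ) (s : Finset (Fin n)) : Measure ℝ :=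
  (s.card : ENNReal)⁻¹ • ∑ i ∈ s, Measure.dirac (y i)

/-- A locally bounded real function of a real variable. -/
def LocallyBdd (f : ℝ → ℝ) : Prop :=
  ∀ η₀ : ℝ, ∃ ε : ℝ, 0 < ε ∧ ∃ C : ℝ, ∀ η : ℝ, |η - η₀| < ε → |f η| ≤ C

/-- All CDFs in the class `𝓕` are continuous and strictly increasing on a shared
support interval. -/
def CSI (𝓕 : Set (Measure ℝ)) : Prop :=
  ∃ S : Set ℝ, S.Nonempty ∧ S.OrdConnected ∧ ∀ G ∈ 𝓕,
    Continuous (cdfAt G) ∧ StrictMonoOn (cdfAt G) S ∧ G Sᶜ = 0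

/-- The conditioning variable for quantile calibration at level `α`: the interval of
`α`-quantiles, represented by its endpoints. -/
def qPairOf (F : Ω → Measure ℝ) (α : ℝ) (ω : Ω) : ℝ × ℝ :=
  (lowerQuantile (F ω) α, upperQuantile (F ω) α)

/-- `F` is quantile calibrated: for every `α ∈ (0,1)`,
`q_α(L(Y | q_α(F))) = q_α(F)` almost surely. -/
def QuantileCalibrated (μ : Measure Ω) [IsFiniteMeasure μ]
    (F : Ω → Measure ℝ) (Y : Ω → ℝ) : Prop :=
  ∀ α ∈ Set.Ioo (0:ℝ) 1, ∀ᵐ ω ∂μ,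
    lowerQuantile (condDistrib Y (qPairOf F α) μ (qPairOf F α ω)) α
      = lowerQuantile (F ω) α ∧
    upperQuantile (condDistrib Y (qPairOf F α) μ (qPairOf F α ω)) α
      = upperQuantile (F ω) α


/-! ### Auxiliary construction for the counterexample -/

namespace CEx

open Set
open scoped ENNReal

/-- piecewise-constant-density CDF on [0,1] with 4 bins -/
def pc (c1 c2 c3 c4 t : ℝ) : ℝ :=
  c1 * (min t 4⁻¹ - min t 0) + c2 * (min t 2⁻¹ - min t 4⁻¹)
  + c3 * (min t (3/4) - min t 2⁻¹) + c4 * (min t 1 - min t (3/4))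

lemma mindiff_nonneg {a b : ℝ} (t : ℝ) (h : a ≤ b) : 0 ≤ min t b - min t a :=
  sub_nonneg.2 (min_le_min le_rfl h)

lemma mindiff_le {a b : ℝ} (t : ℝ) (h : a ≤ b) : min t b - min t a ≤ b - a := by
  rcases le_total t a with h1 | h1 <;> rcases le_total t b with h2 | h2 <;>
    simp [min_eq_left, min_eq_right, h1, h2] <;> linarith

lemma mindiff_mono {a b x y : ℝ} (h : a ≤ b) (hxy : x ≤ y) :
    min x b - min x a ≤ min y b - min y a := by
  rcases le_total x a with h1 | h1 <;> rcases le_total x b with h2 | h2 <;>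
    rcases le_total y a with h3 | h3 <;> rcases le_total y b with h4 | h4 <;>
    simp [min_eq_left, min_eq_right, h1, h2, h3, h4] <;> linarith

variable {c1 c2 c3 c4 : ℝ}

lemma pc_nonneg (h1 : 0 ≤ c1) (h2 : 0 ≤ c2) (h3 : 0 ≤ c3) (h4 : 0 ≤ c4) (t : ℝ) :
    0 ≤ pc c1 c2 c3 c4 t := by
  have := mindiff_nonneg (a := (0:ℝ)) (b := 4⁻¹) t (by norm_num)
  have := mindiff_nonneg (a := (4:ℝ)⁻¹) (b := 2⁻¹) t (by norm_num)
  have := mindiff_nonneg (a := (2:ℝ)⁻¹) (b := 3/4) t (by norm_num)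
  have := mindiff_nonneg (a := (3:ℝ)/4) (b := 1) t (by norm_num)
  unfold pc; nlinarith

lemma pc_mono (h1 : 0 ≤ c1) (h2 : 0 ≤ c2) (h3 : 0 ≤ c3) (h4 : 0 ≤ c4) :
    Monotone (pc c1 c2 c3 c4) := by
  intro x y hxy
  have a1 := mindiff_mono (a := (0:ℝ)) (b := 4⁻¹) (by norm_num) hxy
  have a2 := mindiff_mono (a := (4:ℝ)⁻¹) (b := 2⁻¹) (by norm_num) hxy
  have a3 := mindiff_mono (a := (2:ℝ)⁻¹) (b := 3/4) (by norm_num) hxy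
  have a4 := mindiff_mono (a := (3:ℝ)/4) (b := 1) (by norm_num) hxy
  unfold pc; nlinarith

lemma pc_cont : Continuous (pc c1 c2 c3 c4) := by
  unfold pc; fun_prop

lemma pc_strict (h1 : 2⁻¹ ≤ c1) (h2 : 2⁻¹ ≤ c2) (h3 : 2⁻¹ ≤ c3) (h4 : 2⁻¹ ≤ c4) :
    StrictMonoOn (pc c1 c2 c3 c4) (Icc 0 1) := by
  intro x hx y hy hxy
  have a1 := mindiff_mono (a := (0:ℝ)) (b := 4⁻¹) (by norm_num) hxy.le
  have a2 := mindiff_mono (a := (4:ℝ)⁻¹) (b := 2⁻¹) (by norm_num) hxy.le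
  have a3 := mindiff_mono (a := (2:ℝ)⁻¹) (b := 3/4) (by norm_num) hxy.le
  have a4 := mindiff_mono (a := (3:ℝ)/4) (b := 1) (by norm_num) hxy.le
  have e1 : min x (1:ℝ) = x := min_eq_left hx.2
  have e2 : min y (1:ℝ) = y := min_eq_left hy.2
  have e3 : min x (0:ℝ) = 0 := min_eq_right hx.1
  have e4 : min y (0:ℝ) = 0 := min_eq_right hy.1
  unfold pc
  nlinarith [mindiff_nonneg (a := (0:ℝ)) (b := 4⁻¹) y (by norm_num)]

lemma pc_bin1 {t : ℝ} (h0 : 0 ≤ t) (h1 : t ≤ 4⁻¹) : pc c1 c2 c3 c4 t = c1 * t := by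
  unfold pc
  rw [min_eq_left h1, min_eq_right h0, min_eq_left (by linarith : t ≤ 2⁻¹),
    min_eq_left (by linarith : t ≤ 3/4), min_eq_left (by linarith : t ≤ 1)]
  ring

lemma pc_bin2 {t : ℝ} (h0 : 4⁻¹ ≤ t) (h1 : t ≤ 2⁻¹) :
    pc c1 c2 c3 c4 t = c1 * 4⁻¹ + c2 * (t - 4⁻¹) := by
  unfold pc
  rw [min_eq_right (by linarith : (4:ℝ)⁻¹ ≤ t), min_eq_right (by linarith : (0:ℝ) ≤ t),
    min_eq_left h1, min_eq_left (by linarith : t ≤ 3/4), min_eq_left (by linarith : t ≤ 1)]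
  ring

lemma pc_bin3 {t : ℝ} (h0 : 2⁻¹ ≤ t) (h1 : t ≤ 3/4) :
    pc c1 c2 c3 c4 t = c1 * 4⁻¹ + c2 * 4⁻¹ + c3 * (t - 2⁻¹) := by
  unfold pc
  rw [min_eq_right (by linarith : (4:ℝ)⁻¹ ≤ t), min_eq_right (by linarith : (0:ℝ) ≤ t),
    min_eq_right (by linarith : (2:ℝ)⁻¹ ≤ t), min_eq_left h1,
    min_eq_left (by linarith : t ≤ 1)]
  ring

lemma pc_bin4 {t : ℝ} (h0 : 3/4 ≤ t) (h1 : t ≤ 1) :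
    pc c1 c2 c3 c4 t = c1 * 4⁻¹ + c2 * 4⁻¹ + c3 * 4⁻¹ + c4 * (t - 3/4) := by
  unfold pc
  rw [min_eq_right (by linarith : (4:ℝ)⁻¹ ≤ t), min_eq_right (by linarith : (0:ℝ) ≤ t),
    min_eq_right (by linarith : (2:ℝ)⁻¹ ≤ t), min_eq_right (by linarith : (3:ℝ)/4 ≤ t),
    min_eq_left h1]
  ring

lemma pc_one : pc c1 c2 c3 c4 1 = (c1 + c2 + c3 + c4) * 4⁻¹ := by
  rw [pc_bin4 (by norm_num) le_rfl]; ring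

lemma pc_le_one (h1 : 0 ≤ c1) (h2 : 0 ≤ c2) (h3 : 0 ≤ c3) (h4 : 0 ≤ c4)
    (hs : c1 + c2 + c3 + c4 = 4) (t : ℝ) : pc c1 c2 c3 c4 t ≤ 1 := by
  have b1 := mindiff_le (a := (0:ℝ)) (b := 4⁻¹) t (by norm_num)
  have b2 := mindiff_le (a := (4:ℝ)⁻¹) (b := 2⁻¹) t (by norm_num)
  have b3 := mindiff_le (a := (2:ℝ)⁻¹) (b := 3/4) t (by norm_num)
  have b4 := mindiff_le (a := (3:ℝ)/4) (b := 1) t (by norm_num)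
  have a1 := mindiff_nonneg (a := (0:ℝ)) (b := 4⁻¹) t (by norm_num)
  have a2 := mindiff_nonneg (a := (4:ℝ)⁻¹) (b := 2⁻¹) t (by norm_num)
  have a3 := mindiff_nonneg (a := (2:ℝ)⁻¹) (b := 3/4) t (by norm_num)
  have a4 := mindiff_nonneg (a := (3:ℝ)/4) (b := 1) t (by norm_num)
  unfold pc; nlinarith


def sd (c1 c2 c3 c4 : ℝ) : ℝ → ℝ≥0∞ := fun x =>
  (Ico (0:ℝ) 4⁻¹).indicator (fun _ => ENNReal.ofReal c1) x
  + (Ico (4⁻¹:ℝ) 2⁻¹).indicator (fun _ => ENNReal.ofReal c2) x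
  + (Ico (2⁻¹:ℝ) (3/4)).indicator (fun _ => ENNReal.ofReal c3) x
  + (Ico ((3:ℝ)/4) 1).indicator (fun _ => ENNReal.ofReal c4) x

lemma sd_meas (c1 c2 c3 c4 : ℝ) : Measurable (sd c1 c2 c3 c4) := by
  unfold sd
  exact (((measurable_const.indicator measurableSet_Ico).add
    (measurable_const.indicator measurableSet_Ico)).add
    (measurable_const.indicator measurableSet_Ico)).add
    (measurable_const.indicator measurableSet_Ico)

lemma sd_zero {c1 c2 c3 c4 x : ℝ} (hx : x ∉ Icc (0:ℝ) 1) : sd c1 c2 c3 c4 x = 0 := by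
  simp only [mem_Icc, not_and_or, not_le] at hx
  unfold sd
  rcases hx with h | h <;>
    rw [indicator_of_notMem (fun hm => by simp only [mem_Ico] at hm; linarith [hm.1, hm.2]),
      indicator_of_notMem (fun hm => by simp only [mem_Ico] at hm; linarith [hm.1, hm.2]),
      indicator_of_notMem (fun hm => by simp only [mem_Ico] at hm; linarith [hm.1, hm.2]),
      indicator_of_notMem (fun hm => by simp only [mem_Ico] at hm; linarith [hm.1, hm.2])] <;>
    simp

def sm (c1 c2 c3 c4 : ℝ) : Measure ℝ := volume.withDensity (sd c1 c2 c3 c4)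

lemma vol_Ico_inter_Iic {a b : ℝ} (t : ℝ) (hab : a ≤ b) :
    volume (Ico a b ∩ Iic t) = ENNReal.ofReal (min t b - min t a) := by
  rcases lt_or_ge t b with h | h
  · have hset : Ico a b ∩ Iic t = Icc a t := by
      ext z
      simp only [mem_inter_iff, mem_Ico, mem_Iic, mem_Icc]
      constructor
      · rintro ⟨⟨hz1, _⟩, hz3⟩; exact ⟨hz1, hz3⟩
      · rintro ⟨hz1, hz3⟩; exact ⟨⟨hz1, lt_of_le_of_lt hz3 h⟩, hz3⟩
    rw [hset, Real.volume_Icc, min_eq_left h.le]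
    rcases le_total t a with h2 | h2
    · rw [min_eq_left h2]
      simp only [sub_self, ENNReal.ofReal_zero, ENNReal.ofReal_eq_zero]
      linarith
    · rw [min_eq_right h2]
  · have hset : Ico a b ∩ Iic t = Ico a b := by
      rw [inter_eq_left]
      intro z hz
      exact le_trans hz.2.le h
    rw [hset, Real.volume_Ico, min_eq_right h, min_eq_right (le_trans hab h)]

lemma lint_ind {a b t : ℝ} (hab : a ≤ b) (C : ℝ≥0∞) :
    ∫⁻ x in Iic t, (Ico a b).indicator (fun _ => C) x ∂volume
      = C * ENNReal.ofReal (min t b - min t a) := by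
  rw [lintegral_indicator measurableSet_Ico, Measure.restrict_restrict measurableSet_Ico,
    setLIntegral_const, vol_Ico_inter_Iic t hab, mul_comm]

lemma sm_Iic {c1 c2 c3 c4 : ℝ} (h1 : 0 ≤ c1) (h2 : 0 ≤ c2) (h3 : 0 ≤ c3) (h4 : 0 ≤ c4)
    (t : ℝ) : sm c1 c2 c3 c4 (Iic t) = ENNReal.ofReal (pc c1 c2 c3 c4 t) := by
  have m1 := mindiff_nonneg (a := (0:ℝ)) (b := 4⁻¹) t (by norm_num)
  have m2 := mindiff_nonneg (a := (4:ℝ)⁻¹) (b := 2⁻¹) t (by norm_num)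
  have m3 := mindiff_nonneg (a := (2:ℝ)⁻¹) (b := 3/4) t (by norm_num)
  have m4 := mindiff_nonneg (a := (3:ℝ)/4) (b := 1) t (by norm_num)
  have hpc : pc c1 c2 c3 c4 t
      = c1 * (min t 4⁻¹ - min t 0) + c2 * (min t 2⁻¹ - min t 4⁻¹)
        + c3 * (min t (3/4) - min t 2⁻¹) + c4 * (min t 1 - min t (3/4)) := rfl
  rw [sm, withDensity_apply _ measurableSet_Iic]
  unfold sd
  rw [lintegral_add_left (f := fun a => (Ico (0:ℝ) 4⁻¹).indicator (fun _ => ENNReal.ofReal c1) a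
        + (Ico (4⁻¹:ℝ) 2⁻¹).indicator (fun _ => ENNReal.ofReal c2) a
        + (Ico (2⁻¹:ℝ) (3/4)).indicator (fun _ => ENNReal.ofReal c3) a) (((measurable_const.indicator measurableSet_Ico).add
      (measurable_const.indicator measurableSet_Ico)).add
      (measurable_const.indicator measurableSet_Ico)),
    lintegral_add_left (f := fun a => (Ico (0:ℝ) 4⁻¹).indicator (fun _ => ENNReal.ofReal c1) a
        + (Ico (4⁻¹:ℝ) 2⁻¹).indicator (fun _ => ENNReal.ofReal c2) a) ((measurable_const.indicator measurableSet_Ico).add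
      (measurable_const.indicator measurableSet_Ico)),
    lintegral_add_left (measurable_const.indicator measurableSet_Ico)]
  rw [lint_ind (by norm_num) _, lint_ind (by norm_num) _, lint_ind (by norm_num) _,
    lint_ind (by norm_num) _, hpc]
  rw [ENNReal.ofReal_add (by positivity) (by positivity),
    ENNReal.ofReal_add (by positivity) (by positivity),
    ENNReal.ofReal_add (by positivity) (by positivity),
    ENNReal.ofReal_mul h1, ENNReal.ofReal_mul h2, ENNReal.ofReal_mul h3, ENNReal.ofReal_mul h4]


variable {c1 c2 c3 c4 : ℝ}

-- now new stuff
variable {c1 c2 c3 c4 : ℝ}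

lemma sm_compl : sm c1 c2 c3 c4 (Icc (0:ℝ) 1)ᶜ = 0 := by
  rw [sm, withDensity_apply _ measurableSet_Icc.compl]
  rw [setLIntegral_congr_fun measurableSet_Icc.compl
    (fun x hx => sd_zero hx)]
  simp

lemma sm_singleton (y : ℝ) : sm c1 c2 c3 c4 {y} = 0 :=
  withDensity_absolutelyContinuous volume _ (Real.volume_singleton)

lemma cdfLt_eq_cdfAt (t : ℝ) : cdfLt (sm c1 c2 c3 c4) t = cdfAt (sm c1 c2 c3 c4) t := by
  unfold cdfLt cdfAt
  rw [← Iio_union_right, measure_union (by simp) (measurableSet_singleton t), sm_singleton,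
    add_zero]

lemma cdfAt_sm (h1 : 0 ≤ c1) (h2 : 0 ≤ c2) (h3 : 0 ≤ c3) (h4 : 0 ≤ c4) (t : ℝ) :
    cdfAt (sm c1 c2 c3 c4) t = pc c1 c2 c3 c4 t := by
  rw [cdfAt, sm_Iic h1 h2 h3 h4, ENNReal.toReal_ofReal (pc_nonneg h1 h2 h3 h4 t)]

lemma sm_univ (h1 : 0 ≤ c1) (h2 : 0 ≤ c2) (h3 : 0 ≤ c3) (h4 : 0 ≤ c4) :
    sm c1 c2 c3 c4 univ = ENNReal.ofReal (pc c1 c2 c3 c4 1) := by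
  refine le_antisymm ?_ ?_
  · have hcover : (univ : Set ℝ) ⊆ Iic 1 ∪ (Icc (0:ℝ) 1)ᶜ := by
      intro z _
      rcases le_or_gt z 1 with h | h
      · exact Or.inl h
      · exact Or.inr (fun hz => absurd hz.2 (not_le.2 h))
    calc sm c1 c2 c3 c4 univ ≤ sm c1 c2 c3 c4 (Iic 1 ∪ (Icc (0:ℝ) 1)ᶜ) := measure_mono hcover
      _ ≤ sm c1 c2 c3 c4 (Iic 1) + sm c1 c2 c3 c4 (Icc (0:ℝ) 1)ᶜ := measure_union_le _ _
      _ = ENNReal.ofReal (pc c1 c2 c3 c4 1) := by rw [sm_compl, add_zero, sm_Iic h1 h2 h3 h4]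
  · rw [← sm_Iic h1 h2 h3 h4]
    exact measure_mono (subset_univ _)

lemma sm_prob (h1 : 0 ≤ c1) (h2 : 0 ≤ c2) (h3 : 0 ≤ c3) (h4 : 0 ≤ c4)
    (hs : c1 + c2 + c3 + c4 = 4) : IsProbabilityMeasure (sm c1 c2 c3 c4) := by
  constructor
  rw [sm_univ h1 h2 h3 h4, pc_one, hs]
  norm_num


lemma preimage_pc {Φ : ℝ → ℝ} (hmono : Monotone Φ) (hsm : StrictMonoOn Φ (Icc 0 1))
    (h1 : Φ 1 = 1) {x s : ℝ} (hs0 : 0 ≤ s) (hs1 : s < 1) (hval : Φ s = x) :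
    {y | Φ y ≤ x} = Iic s := by
  ext y
  simp only [mem_setOf_eq, mem_Iic]
  constructor
  · intro hy
    by_contra hys
    push_neg at hys
    rcases le_or_gt y 1 with hy1 | hy1
    · have : Φ s < Φ y := hsm ⟨hs0, hs1.le⟩ ⟨le_trans hs0 hys.le, hy1⟩ hys
      rw [hval] at this; linarith
    · have hx1 : x < 1 := by
        have : Φ s < Φ 1 := hsm ⟨hs0, hs1.le⟩ ⟨zero_le_one, le_rfl⟩ hs1
        rw [hval, h1] at this; exact this
      have : Φ 1 ≤ Φ y := hmono hy1.le
      rw [h1] at this; linarith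
  · intro hy
    calc Φ y ≤ Φ s := hmono hy
      _ = x := hval

lemma key (x : ℝ) (hx0 : 0 ≤ x) (hx1 : x < 1) :
    ∃ st sf : ℝ, 0 ≤ st ∧ st < 1 ∧ 0 ≤ sf ∧ sf < 1 ∧
      pc 1 2⁻¹ (3/2) 1 st = x ∧ pc 1 (3/2) 2⁻¹ 1 sf = x ∧
      pc (3/2) 2⁻¹ (3/2) 2⁻¹ st + pc 2⁻¹ (3/2) 2⁻¹ (3/2) sf = 2 * x := by
  rcases le_or_gt x 4⁻¹ with r1 | r1
  · refine ⟨x, x, hx0, by linarith, hx0, by linarith, ?_, ?_, ?_⟩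
    · rw [pc_bin1 hx0 r1]; ring
    · rw [pc_bin1 hx0 r1]; ring
    · rw [pc_bin1 hx0 r1, pc_bin1 hx0 r1]; ring
  rcases le_or_gt x (3/8) with r2 | r2
  · refine ⟨2*x - 4⁻¹, 2*x/3 + 12⁻¹, by linarith, by linarith, by linarith, by linarith,
      ?_, ?_, ?_⟩
    · rw [pc_bin2 (by linarith) (by linarith)]; ring
    · rw [pc_bin2 (by linarith) (by linarith)]; ring
    · rw [pc_bin2 (by linarith) (by linarith), pc_bin2 (by linarith) (by linarith)]; ring
  rcases le_or_gt x (5/8) with r3 | r3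
  · refine ⟨2*x/3 + 4⁻¹, 2*x/3 + 12⁻¹, by linarith, by linarith, by linarith, by linarith,
      ?_, ?_, ?_⟩
    · rw [pc_bin3 (by linarith) (by linarith)]; ring
    · rw [pc_bin2 (by linarith) (by linarith)]; ring
    · rw [pc_bin3 (by linarith) (by linarith), pc_bin2 (by linarith) (by linarith)]; ring
  rcases le_or_gt x (3/4) with r4 | r4
  · refine ⟨2*x/3 + 4⁻¹, 2*x - 3/4, by linarith, by linarith, by linarith, by linarith,
      ?_, ?_, ?_⟩
    · rw [pc_bin3 (by linarith) (by linarith)]; ring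
    · rw [pc_bin3 (by linarith) (by linarith)]; ring
    · rw [pc_bin3 (by linarith) (by linarith), pc_bin3 (by linarith) (by linarith)]; ring
  · refine ⟨x, x, by linarith, hx1, by linarith, hx1, ?_, ?_, ?_⟩
    · rw [pc_bin4 (by linarith) (by linarith)]; ring
    · rw [pc_bin4 (by linarith) (by linarith)]; ring
    · rw [pc_bin4 (by linarith) (by linarith), pc_bin4 (by linarith) (by linarith)]; ring

lemma gt38 : pc 1 2⁻¹ (3/2) 1 (3/8) = 5/16 := by
  rw [pc_bin2 (by norm_num) (by norm_num)]; norm_num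
lemma gf38 : pc 1 (3/2) 2⁻¹ 1 (3/8) = 7/16 := by
  rw [pc_bin2 (by norm_num) (by norm_num)]; norm_num
lemma ht38 : pc (3/2) 2⁻¹ (3/2) 2⁻¹ (3/8) = 7/16 := by
  rw [pc_bin2 (by norm_num) (by norm_num)]; norm_num



lemma pc_marg (t : ℝ) : pc 1 (2⁻¹:ℝ) (3/2) 1 t + pc 1 (3/2) (2⁻¹:ℝ) 1 t
    = pc (3/2) (2⁻¹:ℝ) (3/2) (2⁻¹:ℝ) t + pc (2⁻¹:ℝ) (3/2) (2⁻¹:ℝ) (3/2) t := by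
  unfold pc; ring

-- concrete objects
abbrev Omega : Type := (Bool × ℝ) × ℝ

def Gm : Bool → Measure ℝ := fun b => if b then sm 1 (2⁻¹:ℝ) (3/2) 1 else sm 1 (3/2) (2⁻¹:ℝ) 1
def Hm : Bool → Measure ℝ := fun b => if b then sm (3/2) (2⁻¹:ℝ) (3/2) (2⁻¹:ℝ) else sm (2⁻¹:ℝ) (3/2) (2⁻¹:ℝ) (3/2)
def mB (b : Bool) : Measure (Bool × ℝ) := (Hm b).map (Prod.mk b)
def mu0 : Measure (Bool × ℝ) := (2⁻¹ : ℝ≥0∞) • mB true + (2⁻¹ : ℝ≥0∞) • mB false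
def mu : Measure Omega := mu0.prod unif01
def Fo : Omega → Measure ℝ := fun ω => Gm ω.1.1
def Yo : Omega → ℝ := fun ω => ω.1.2
def Uo : Omega → ℝ := fun ω => ω.2

instance unif01_prob : IsProbabilityMeasure unif01 := by
  constructor
  rw [unif01, Measure.restrict_apply_univ, Real.volume_Icc]
  norm_num

instance Gm_prob (b : Bool) : IsProbabilityMeasure (Gm b) := by
  cases b <;> simp only [Gm, if_true, if_false, Bool.false_eq_true] <;>
    exact sm_prob (by norm_num) (by norm_num) (by norm_num) (by norm_num) (by norm_num)

instance Hm_prob (b : Bool) : IsProbabilityMeasure (Hm b) := by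
  cases b <;> simp only [Hm, if_true, if_false, Bool.false_eq_true] <;>
    exact sm_prob (by norm_num) (by norm_num) (by norm_num) (by norm_num) (by norm_num)

instance mB_prob (b : Bool) : IsProbabilityMeasure (mB b) :=
  Measure.isProbabilityMeasure_map measurable_prodMk_left.aemeasurable

instance mu0_prob : IsProbabilityMeasure mu0 := by
  constructor
  simp only [mu0, Measure.add_apply, Measure.smul_apply, smul_eq_mul, measure_univ, mul_one]
  exact ENNReal.inv_two_add_inv_two

instance mu_prob : IsProbabilityMeasure mu := by
  rw [mu]; infer_instance

lemma mu0_apply {s2 : Set (Bool × ℝ)} (hs2 : MeasurableSet s2) :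
    mu0 s2 = 2⁻¹ * Hm true (Prod.mk true ⁻¹' s2) + 2⁻¹ * Hm false (Prod.mk false ⁻¹' s2) := by
  simp only [mu0, Measure.add_apply, Measure.smul_apply, smul_eq_mul, mB,
    Measure.map_apply measurable_prodMk_left hs2]

lemma mu_prod_apply {s2 : Set (Bool × ℝ)} (hs2 : MeasurableSet s2) (s : Set ℝ) :
    mu (s2 ×ˢ s) = mu0 s2 * unif01 s := by
  rw [mu, Measure.prod_prod]

-- prediction space fields
lemma measFo : Measurable Fo :=
  (measurable_from_top (f := Gm)).comp (measurable_fst.fst)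

lemma measYo : Measurable Yo := measurable_fst.snd

lemma measUo : Measurable Uo := measurable_snd

lemma unifUo : mu.map Uo = unif01 := by
  have : mu.map Uo = Measure.map Prod.snd mu := rfl
  rw [this, mu, Measure.map_snd_prod, measure_univ, one_smul]

lemma comap_le_fst :
    MeasurableSpace.comap Fo inferInstance ⊔ MeasurableSpace.comap Yo inferInstance ≤
      MeasurableSpace.comap (Prod.fst : Omega → Bool × ℝ) inferInstance := by
  apply sup_le
  · have : Fo = (fun p : Bool × ℝ => Gm p.1) ∘ Prod.fst := rfl
    rw [this, ← MeasurableSpace.comap_comp]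
    have hf : Measurable (fun p : Bool × ℝ => Gm p.1) := (measurable_from_top (f := Gm)).comp measurable_fst
    exact MeasurableSpace.comap_mono hf.comap_le
  · have : Yo = (Prod.snd : Bool × ℝ → ℝ) ∘ Prod.fst := rfl
    rw [this, ← MeasurableSpace.comap_comp]
    exact MeasurableSpace.comap_mono measurable_snd.comap_le

lemma indepUo : Indep (MeasurableSpace.comap Uo inferInstance)
    (MeasurableSpace.comap Fo inferInstance ⊔ MeasurableSpace.comap Yo inferInstance) mu := by
  rw [Indep_iff]
  intro t1 t2 h1 h2
  obtain ⟨s, hs, rfl⟩ := h1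
  obtain ⟨s2, hs2, ht2⟩ := comap_le_fst t2 h2
  subst ht2
  have e1 : (Prod.fst : Omega → Bool × ℝ) ⁻¹' s2 ∩ Uo ⁻¹' s = s2 ×ˢ s := by
    ext ω; simp [Uo, mem_prod, and_comm]
  have e2 : (Uo ⁻¹' s : Set Omega) = (univ : Set (Bool × ℝ)) ×ˢ s := by
    ext ω; simp [Uo, mem_prod]
  have e3 : ((Prod.fst : Omega → Bool × ℝ) ⁻¹' s2) = s2 ×ˢ (univ : Set ℝ) := by
    ext ω; simp [mem_prod]
  rw [inter_comm, e1, e2, e3, mu_prod_apply hs2, mu_prod_apply MeasurableSet.univ,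
    mu_prod_apply hs2]
  simp only [measure_univ, mul_one, one_mul]
  ring


-- new content
def phi : Bool → ℝ → ℝ := fun b => if b then pc 1 (2⁻¹:ℝ) (3/2) 1 else pc 1 (3/2) (2⁻¹:ℝ) 1

lemma cdfAt_Gm (b : Bool) (t : ℝ) : cdfAt (Gm b) t = phi b t := by
  cases b <;> simp only [Gm, phi, Bool.false_eq_true, if_true, if_false] <;>
    exact cdfAt_sm (by norm_num) (by norm_num) (by norm_num) (by norm_num) t

lemma cdfLt_Gm (b : Bool) (t : ℝ) : cdfLt (Gm b) t = phi b t := by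
  cases b <;> simp only [Gm, phi, Bool.false_eq_true, if_true, if_false] <;>
    rw [cdfLt_eq_cdfAt] <;>
    exact cdfAt_sm (by norm_num) (by norm_num) (by norm_num) (by norm_num) t

lemma phi_mono (b : Bool) : Monotone (phi b) := by
  cases b <;> simp only [phi, Bool.false_eq_true, if_true, if_false] <;>
    exact pc_mono (by norm_num) (by norm_num) (by norm_num) (by norm_num)

lemma phi_strict (b : Bool) : StrictMonoOn (phi b) (Icc 0 1) := by
  cases b <;> simp only [phi, Bool.false_eq_true, if_true, if_false] <;>
    exact pc_strict (by norm_num) (by norm_num) (by norm_num) (by norm_num)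

lemma phi_one (b : Bool) : phi b 1 = 1 := by
  cases b <;> simp only [phi, Bool.false_eq_true, if_true, if_false] <;>
    rw [pc_one] <;> norm_num

lemma phi_nonneg (b : Bool) (t : ℝ) : 0 ≤ phi b t := by
  cases b <;> simp only [phi, Bool.false_eq_true, if_true, if_false] <;>
    exact pc_nonneg (by norm_num) (by norm_num) (by norm_num) (by norm_num) t

lemma phi_le_one (b : Bool) (t : ℝ) : phi b t ≤ 1 := by
  cases b <;> simp only [phi, Bool.false_eq_true, if_true, if_false] <;>
    exact pc_le_one (by norm_num) (by norm_num) (by norm_num) (by norm_num) (by norm_num) t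

def pcmap : Bool × ℝ → ℝ := fun p => phi p.1 p.2

lemma pcmap_meas : Measurable pcmap := by
  have : pcmap = fun p : Bool × ℝ =>
      if p.1 = true then pc 1 (2⁻¹:ℝ) (3/2) 1 p.2 else pc 1 (3/2) (2⁻¹:ℝ) 1 p.2 := by
    funext p
    rcases p with ⟨b, y⟩
    cases b <;> simp [pcmap, phi]
  rw [this]
  exact Measurable.ite (measurable_fst (measurableSet_singleton true))
    (pc_cont.measurable.comp measurable_snd) (pc_cont.measurable.comp measurable_snd)

lemma unif01_Iic (x : ℝ) : unif01 (Iic x) = ENNReal.ofReal (min x 1) := by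
  rw [unif01, Measure.restrict_apply measurableSet_Iic]
  have : Iic x ∩ Icc 0 1 = Icc 0 (min x 1) := by
    ext z
    simp only [mem_inter_iff, mem_Iic, mem_Icc, le_min_iff]
    tauto
  rw [this, Real.volume_Icc, sub_zero]

lemma PIT_eq : PIT Fo Yo Uo = pcmap ∘ Prod.fst := by
  funext ω
  show cdfLt (Fo ω) (Yo ω) + Uo ω * (cdfAt (Fo ω) (Yo ω) - cdfLt (Fo ω) (Yo ω)) = _
  simp only [Fo, Yo, cdfLt_Gm, cdfAt_Gm, Function.comp_apply]
  show _ = phi ω.1.1 ω.1.2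
  ring

lemma prob_cal : ProbCalibrated mu Fo Yo Uo := by
  rw [ProbCalibrated, PIT_eq, ← Measure.map_map pcmap_meas measurable_fst, mu,
    Measure.map_fst_prod, measure_univ, one_smul]
  have hmap : mu0.map pcmap = (2⁻¹ : ℝ≥0∞) • (Hm true).map (phi true)
      + (2⁻¹ : ℝ≥0∞) • (Hm false).map (phi false) := by
    rw [mu0, Measure.map_add _ _ pcmap_meas, Measure.map_smul, Measure.map_smul,
      mB, mB, Measure.map_map pcmap_meas measurable_prodMk_left,
      Measure.map_map pcmap_meas measurable_prodMk_left]
    rfl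
  rw [hmap]
  have hmt : Measurable (phi true) := pc_cont.measurable
  have hmf : Measurable (phi false) := pc_cont.measurable
  haveI i1 : IsProbabilityMeasure ((Hm true).map (phi true)) :=
    Measure.isProbabilityMeasure_map hmt.aemeasurable
  haveI i2 : IsProbabilityMeasure ((Hm false).map (phi false)) :=
    Measure.isProbabilityMeasure_map hmf.aemeasurable
  haveI : IsFiniteMeasure ((2⁻¹ : ℝ≥0∞) • (Hm true).map (phi true)
      + (2⁻¹ : ℝ≥0∞) • (Hm false).map (phi false)) := by
    constructor
    simp only [Measure.add_apply, Measure.smul_apply, smul_eq_mul, measure_univ, mul_one]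
    rw [ENNReal.inv_two_add_inv_two]
    exact ENNReal.one_lt_top
  apply Measure.ext_of_Iic
  intro a
  simp only [Measure.add_apply, Measure.smul_apply, smul_eq_mul,
    Measure.map_apply hmt measurableSet_Iic, Measure.map_apply hmf measurableSet_Iic]
  rw [unif01_Iic]
  rcases lt_or_ge a 0 with ha | ha
  · have h1 : (phi true) ⁻¹' Iic a = ∅ := by
      apply eq_empty_of_forall_notMem
      intro y hy
      exact absurd (le_trans (phi_nonneg true y) hy) (not_le.2 ha)
    have h2 : (phi false) ⁻¹' Iic a = ∅ := by
      apply eq_empty_of_forall_notMem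
      intro y hy
      exact absurd (le_trans (phi_nonneg false y) hy) (not_le.2 ha)
    rw [h1, h2]
    simp [ENNReal.ofReal_eq_zero, min_le_iff, ha.le, ENNReal.ofReal_of_nonpos ha.le]
  rcases lt_or_ge a 1 with ha1 | ha1
  · obtain ⟨st, sf, hst0, hst1, hsf0, hsf1, hvt, hvf, hsum⟩ := key a ha ha1
    have e1 : (phi true) ⁻¹' Iic a = Iic st := by
      rw [show (phi true) ⁻¹' Iic a = {y | phi true y ≤ a} from rfl]
      exact preimage_pc (phi_mono true) (phi_strict true) (phi_one true) hst0 hst1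
        (by simpa [phi] using hvt)
    have e2 : (phi false) ⁻¹' Iic a = Iic sf := by
      rw [show (phi false) ⁻¹' Iic a = {y | phi false y ≤ a} from rfl]
      exact preimage_pc (phi_mono false) (phi_strict false) (phi_one false) hsf0 hsf1
        (by simpa [phi] using hvf)
    rw [e1, e2]
    have eH1 : Hm true (Iic st) = ENNReal.ofReal (pc (3/2) (2⁻¹:ℝ) (3/2) (2⁻¹:ℝ) st) := by
      simp only [Hm, if_true]
      exact sm_Iic (by norm_num) (by norm_num) (by norm_num) (by norm_num) st
    have eH2 : Hm false (Iic sf) = ENNReal.ofReal (pc (2⁻¹:ℝ) (3/2) (2⁻¹:ℝ) (3/2) sf) := by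
      simp only [Hm, Bool.false_eq_true, if_false]
      exact sm_Iic (by norm_num) (by norm_num) (by norm_num) (by norm_num) sf
    rw [eH1, eH2, min_eq_left ha1.le]
    rw [← mul_add, ← ENNReal.ofReal_add
      (pc_nonneg (by norm_num) (by norm_num) (by norm_num) (by norm_num) st)
      (pc_nonneg (by norm_num) (by norm_num) (by norm_num) (by norm_num) sf), hsum,
      show (2:ℝ) * a = 2 * a from rfl]
    rw [ENNReal.ofReal_mul (by norm_num : (0:ℝ) ≤ 2), ← mul_assoc,
      show ENNReal.ofReal (2:ℝ) = 2 by norm_num,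
      ENNReal.inv_mul_cancel (by norm_num) (by norm_num), one_mul]
  · have h1 : (phi true) ⁻¹' Iic a = univ := by
      apply eq_univ_of_forall
      intro y
      exact le_trans (phi_le_one true y) ha1
    have h2 : (phi false) ⁻¹' Iic a = univ := by
      apply eq_univ_of_forall
      intro y
      exact le_trans (phi_le_one false y) ha1
    rw [h1, h2, measure_univ, measure_univ, min_eq_right ha1, mul_one,
      ENNReal.ofReal_one]
    exact ENNReal.inv_two_add_inv_two


def At : Set Omega := {ω | ω.1.1 = true}

lemma At_meas : MeasurableSet At := by
  have : At = (fun ω : Omega => ω.1.1) ⁻¹' {true} := by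
    ext ω; simp [At]
  rw [this]
  exact (measurable_fst.fst) (measurableSet_singleton true)

lemma At_prod : At = ({p : Bool × ℝ | p.1 = true} ×ˢ (univ : Set ℝ)) := by
  ext ω; simp [At]

lemma Bt_meas : MeasurableSet {p : Bool × ℝ | p.1 = true} := by
  have : {p : Bool × ℝ | p.1 = true} = (Prod.fst : Bool × ℝ → Bool) ⁻¹' {true} := by
    ext p; simp
  rw [this]
  exact measurable_fst (measurableSet_singleton true)

lemma mu_At : mu At = 2⁻¹ := by
  rw [At_prod, mu_prod_apply Bt_meas, mu0_apply Bt_meas]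
  have h1 : Prod.mk true ⁻¹' {p : Bool × ℝ | p.1 = true} = univ := by
    ext y; simp
  have h2 : Prod.mk false ⁻¹' {p : Bool × ℝ | p.1 = true} = ∅ := by
    ext y; simp
  rw [h1, h2]
  simp

lemma Yset_meas (y : ℝ) : MeasurableSet {ω : Omega | Yo ω ≤ y} := by
  have : {ω : Omega | Yo ω ≤ y} = (fun ω : Omega => ω.1.2) ⁻¹' Iic y := rfl
  rw [this]
  exact (measurable_fst.snd) measurableSet_Iic

lemma mu_Yset (y : ℝ) : mu {ω : Omega | Yo ω ≤ y}
    = 2⁻¹ * ENNReal.ofReal (pc (3/2) (2⁻¹:ℝ) (3/2) (2⁻¹:ℝ) y)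
      + 2⁻¹ * ENNReal.ofReal (pc (2⁻¹:ℝ) (3/2) (2⁻¹:ℝ) (3/2) y) := by
  have hset : {ω : Omega | Yo ω ≤ y} = ({p : Bool × ℝ | p.2 ≤ y} ×ˢ (univ : Set ℝ)) := by
    ext ω; simp [Yo]
  have hBm : MeasurableSet {p : Bool × ℝ | p.2 ≤ y} := measurable_snd measurableSet_Iic
  rw [hset, mu_prod_apply hBm, mu0_apply hBm, measure_univ, mul_one]
  have h1 : Prod.mk true ⁻¹' {p : Bool × ℝ | p.2 ≤ y} = Iic y := rfl
  have h2 : Prod.mk false ⁻¹' {p : Bool × ℝ | p.2 ≤ y} = Iic y := rfl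
  rw [h1, h2]
  have e1 : Hm true (Iic y) = ENNReal.ofReal (pc (3/2) (2⁻¹:ℝ) (3/2) (2⁻¹:ℝ) y) := by
    simp only [Hm, if_true]
    exact sm_Iic (by norm_num) (by norm_num) (by norm_num) (by norm_num) y
  have e2 : Hm false (Iic y) = ENNReal.ofReal (pc (2⁻¹:ℝ) (3/2) (2⁻¹:ℝ) (3/2) y) := by
    simp only [Hm, Bool.false_eq_true, if_false]
    exact sm_Iic (by norm_num) (by norm_num) (by norm_num) (by norm_num) y
  rw [e1, e2]

lemma mu_At_inter_Y : mu (At ∩ {ω : Omega | Yo ω ≤ 3/8}) = 2⁻¹ * ENNReal.ofReal (7/16) := by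
  have hset : At ∩ {ω : Omega | Yo ω ≤ 3/8}
      = ({p : Bool × ℝ | p.1 = true ∧ p.2 ≤ 3/8} ×ˢ (univ : Set ℝ)) := by
    ext ω; simp [At, Yo, and_assoc]
  have hBm : MeasurableSet {p : Bool × ℝ | p.1 = true ∧ p.2 ≤ 3/8} := by
    exact (Bt_meas.inter (measurable_snd measurableSet_Iic))
  rw [hset, mu_prod_apply hBm, mu0_apply hBm, measure_univ, mul_one]
  have h1 : Prod.mk true ⁻¹' {p : Bool × ℝ | p.1 = true ∧ p.2 ≤ 3/8} = Iic (3/8 : ℝ) := by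
    ext y; simp
  have h2 : Prod.mk false ⁻¹' {p : Bool × ℝ | p.1 = true ∧ p.2 ≤ 3/8} = ∅ := by
    ext y; simp
  rw [h1, h2]
  have e1 : Hm true (Iic (3/8 : ℝ)) = ENNReal.ofReal (7/16) := by
    simp only [Hm, if_true]
    rw [sm_Iic (by norm_num) (by norm_num) (by norm_num) (by norm_num), ht38]
  rw [e1]
  simp

lemma marg_cal : ∀ y : ℝ, ∫ ω, cdfAt (Fo ω) y ∂mu = (mu {ω : Omega | Yo ω ≤ y}).toReal := by
  intro y
  have hint : (fun ω : Omega => cdfAt (Fo ω) y)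
      = fun ω => phi false y + At.indicator (fun _ => phi true y - phi false y) ω := by
    funext ω
    rw [show Fo ω = Gm ω.1.1 from rfl, cdfAt_Gm]
    by_cases h : ω.1.1 = true
    · have hmem : ω ∈ At := h
      rw [indicator_of_mem hmem, h]
      ring
    · have hmem : ω ∉ At := h
      rw [indicator_of_notMem hmem, Bool.not_eq_true] at *
      rw [h]
      ring
  rw [hint, integral_add (integrable_const _) ((integrable_const _).indicator At_meas),
    integral_const, integral_indicator_const _ At_meas, measureReal_def, measureReal_def, measure_univ, mu_At, mu_Yset]
  have hP : 0 ≤ pc (3/2) (2⁻¹:ℝ) (3/2) (2⁻¹:ℝ) y :=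
    pc_nonneg (by norm_num) (by norm_num) (by norm_num) (by norm_num) y
  have hQ : 0 ≤ pc (2⁻¹:ℝ) (3/2) (2⁻¹:ℝ) (3/2) y :=
    pc_nonneg (by norm_num) (by norm_num) (by norm_num) (by norm_num) y
  rw [← mul_add, ← ENNReal.ofReal_add hP hQ, ENNReal.toReal_mul,
    ENNReal.toReal_ofReal (by linarith)]
  have hmarg := pc_marg y
  have hT : phi true y = pc 1 (2⁻¹:ℝ) (3/2) 1 y := by simp [phi]
  have hF : phi false y = pc 1 (3/2) (2⁻¹:ℝ) 1 y := by simp [phi]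
  rw [hT, hF]
  simp only [ENNReal.toReal_inv, ENNReal.toReal_ofNat, smul_eq_mul, one_smul,
    ENNReal.toReal_one, one_mul]
  linarith

lemma cdfAt38_meas : Measurable (fun ω : Omega => cdfAt (Fo ω) (3/8)) := by
  have : (fun ω : Omega => cdfAt (Fo ω) (3/8)) = (fun b : Bool => phi b (3/8)) ∘
      (fun ω : Omega => ω.1.1) := by
    funext ω
    exact cdfAt_Gm ω.1.1 (3/8)
  rw [this]
  exact measurable_from_top.comp measurable_fst.fst

lemma phi_t38 : phi true (3/8) = 5/16 := by
  simp only [phi, if_true]; exact gt38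

lemma phi_f38 : phi false (3/8) = 7/16 := by
  simp only [phi, Bool.false_eq_true, if_false]; exact gf38

lemma cdfAt38_eq (ω : Omega) : cdfAt (Fo ω) (3/8) = if ω.1.1 = true then 5/16 else 7/16 := by
  rw [show Fo ω = Gm ω.1.1 from rfl, cdfAt_Gm]
  by_cases h : ω.1.1 = true
  · rw [if_pos h, h, phi_t38]
  · rw [if_neg h, Bool.not_eq_true] at *
    rw [h, phi_f38]

/-- The common contradiction: no conditioning variable `g` that determines `At` can satisfy the
conditional-calibration identity at threshold `3/8`. -/
lemma contra_cond {β : Type*} [MeasurableSpace β] (g : Omega → β) (hg : Measurable g)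
    (hA : MeasurableSet[MeasurableSpace.comap g inferInstance] At)
    (hcond : (fun ω => cdfAt (Fo ω) (3/8 : ℝ)) =ᵐ[mu]
      mu[Set.indicator {ω : Omega | Yo ω ≤ (3/8:ℝ)} (fun _ => (1:ℝ)) |
        MeasurableSpace.comap g inferInstance]) : False := by
  have hm : MeasurableSpace.comap g inferInstance ≤ (inferInstance : MeasurableSpace Omega) :=
    hg.comap_le
  haveI : SigmaFinite (mu.trim hm) := by infer_instance
  have hint : Integrable (Set.indicator {ω : Omega | Yo ω ≤ (3/8:ℝ)} (fun _ => (1:ℝ))) mu :=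
    (integrable_const _).indicator (Yset_meas (3/8))
  have h1 : ∫ ω in At, Set.indicator {ω : Omega | Yo ω ≤ (3/8:ℝ)} (fun _ => (1:ℝ)) ω ∂mu
      = ∫ ω in At, (mu[Set.indicator {ω : Omega | Yo ω ≤ (3/8:ℝ)} (fun _ => (1:ℝ)) |
          MeasurableSpace.comap g inferInstance]) ω ∂mu :=
    (setIntegral_condExp hm hint hA).symm
  have h2 : ∫ ω in At, (mu[Set.indicator {ω : Omega | Yo ω ≤ (3/8:ℝ)} (fun _ => (1:ℝ)) |
        MeasurableSpace.comap g inferInstance]) ω ∂mu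
      = ∫ ω in At, cdfAt (Fo ω) (3/8 : ℝ) ∂mu := by
    apply setIntegral_congr_ae (hm At hA)
    exact hcond.symm.mono fun ω hω _ => hω
  have h3 : ∫ ω in At, Set.indicator {ω : Omega | Yo ω ≤ (3/8:ℝ)} (fun _ => (1:ℝ)) ω ∂mu
      = (7:ℝ)/32 := by
    rw [setIntegral_indicator (Yset_meas (3/8)), setIntegral_const, measureReal_def, mu_At_inter_Y]
    rw [ENNReal.toReal_mul, ENNReal.toReal_ofReal (by norm_num)]
    norm_num
  have h4 : ∫ ω in At, cdfAt (Fo ω) (3/8 : ℝ) ∂mu = (5:ℝ)/32 := by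
    have heq : ∀ ω ∈ At, cdfAt (Fo ω) (3/8 : ℝ) = 5/16 := by
      intro ω hω
      have hb : ω.1.1 = true := hω
      rw [cdfAt38_eq, if_pos hb]
    rw [setIntegral_congr_fun (hm At hA) heq, setIntegral_const, measureReal_def, mu_At]
    simp only [ENNReal.toReal_inv, ENNReal.toReal_ofNat, smul_eq_mul]
    norm_num
  rw [h3, h2, h4] at h1
  norm_num at h1

lemma At_eq_preim_cdf : At = (fun ω : Omega => cdfAt (Fo ω) (3/8)) ⁻¹' {(5:ℝ)/16} := by
  ext ω
  simp only [mem_preimage, mem_singleton_iff, cdfAt38_eq]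
  by_cases h : ω.1.1 = true
  · simp only [if_pos h]
    simp [At, h]
  · simp only [if_neg h]
    constructor
    · intro hmem; exact absurd hmem h
    · intro hC; norm_num at hC

lemma At_eq_preim_F : At = Fo ⁻¹' {ν : Measure ℝ | ν (Iic (3/8:ℝ)) = ENNReal.ofReal (5/16)} := by
  have e1 : Gm true (Iic (3/8:ℝ)) = ENNReal.ofReal (5/16) := by
    simp only [Gm, if_true]
    rw [sm_Iic (by norm_num) (by norm_num) (by norm_num) (by norm_num), gt38]
  have e2 : Gm false (Iic (3/8:ℝ)) = ENNReal.ofReal (7/16) := by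
    simp only [Gm, Bool.false_eq_true, if_false]
    rw [sm_Iic (by norm_num) (by norm_num) (by norm_num) (by norm_num), gf38]
  ext ω
  simp only [mem_preimage, mem_setOf_eq, Fo]
  by_cases h : ω.1.1 = true
  · rw [h, e1]
    simp [At, h]
  · rw [Bool.not_eq_true] at h
    rw [h, e2]
    constructor
    · intro hmem
      exact absurd hmem (by rw [show (ω ∈ At) = (ω.1.1 = true) from rfl, h]; simp)
    · intro hC
      rw [ENNReal.ofReal_eq_ofReal_iff (by norm_num) (by norm_num)] at hC
      norm_num at hC

end CEx

/-- **Theorem (Statement 16).** There is a prediction space in which `F` takes finitely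
many values, all continuous strictly increasing CDFs on a shared support interval, such
that `F` is probabilistically and marginally calibrated, yet neither threshold calibrated
nor auto-calibrated.  In particular, joint probabilistic and marginal calibration does
not imply auto-calibration. -/
theorem exists_prob_marg_not_threshold_not_auto :
    ∃ (Ω : Type) (_ : MeasurableSpace Ω) (μ : Measure Ω) (_ : IsProbabilityMeasure μ)
      (F : Ω → Measure ℝ) (Y U : Ω → ℝ),
      IsPredictionSpace μ F Y U ∧
      (∃ 𝓖 : Finset (Measure ℝ), (∀ ω, F ω ∈ 𝓖) ∧ CSI ↑𝓖) ∧
      ProbCalibrated μ F Y U ∧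
      MargCalibrated μ F Y ∧
      ¬ ThreshCalibrated μ F Y ∧
      ¬ AutoCalibrated μ F Y := by
  classical
  refine ⟨CEx.Omega, inferInstance, CEx.mu, inferInstance, CEx.Fo, CEx.Yo, CEx.Uo,
    ⟨inferInstance, fun ω => CEx.Gm_prob ω.1.1, CEx.measFo, CEx.measYo, CEx.measUo,
      CEx.unifUo, CEx.indepUo⟩, ?_, CEx.prob_cal, CEx.marg_cal, ?_, ?_⟩
  · refine ⟨{CEx.Gm true, CEx.Gm false}, ?_, ?_⟩
    · intro ω
      show CEx.Gm ω.1.1 ∈ _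
      by_cases h : ω.1.1 = true
      · rw [h]; exact Finset.mem_insert_self _ _
      · rw [Bool.not_eq_true] at h
        rw [h]
        exact Finset.mem_insert_of_mem (Finset.mem_singleton_self _)
    · refine ⟨Set.Icc 0 1, ⟨0, Set.left_mem_Icc.mpr zero_le_one⟩, Set.ordConnected_Icc, ?_⟩
      intro G hG
      have hG' : G = CEx.Gm true ∨ G = CEx.Gm false := by
        simpa using hG
      have main : ∀ b : Bool, Continuous (cdfAt (CEx.Gm b)) ∧
          StrictMonoOn (cdfAt (CEx.Gm b)) (Set.Icc 0 1) ∧ CEx.Gm b (Set.Icc 0 1)ᶜ = 0 := by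
        intro b
        have hc : cdfAt (CEx.Gm b) = CEx.phi b := funext (CEx.cdfAt_Gm b)
        refine ⟨?_, ?_, ?_⟩
        · rw [hc]
          cases b <;> exact CEx.pc_cont
        · rw [hc]
          exact CEx.phi_strict b
        · cases b <;>
            simp only [CEx.Gm, Bool.false_eq_true, if_true, if_false] <;>
            exact CEx.sm_compl
      rcases hG' with h | h <;> rw [h]
      · exact main true
      · exact main false
  · intro h
    exact CEx.contra_cond (fun ω => cdfAt (CEx.Fo ω) ((3:ℝ)/8)) CEx.cdfAt38_meas
      ⟨{(5:ℝ)/16}, measurableSet_singleton _, CEx.At_eq_preim_cdf.symm⟩ ((h (3/8)).symm)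
  · intro h
    exact CEx.contra_cond CEx.Fo CEx.measFo
      ⟨{ν : Measure ℝ | ν (Set.Iic ((3:ℝ)/8)) = ENNReal.ofReal (5/16)},
        (Measure.measurable_coe measurableSet_Iic) (measurableSet_singleton _),
        CEx.At_eq_preim_F.symm⟩ (h (3/8))

end
end

section
/- Let 𝓕 be a convex class of probability measures on ℝ containing all Dirac measures δ_y. Suppose the functional T is induced on 𝓕 by an identification function of prediction error form, V(x,y) = v(x−y), where v is increasing and left-continuous with v(−r) < 0 and v(r) > 0 for some r > 0. Then any other identification function of prediction error form (with these same properties) that induces T on 𝓕 equals a positive constant multiple of V. -/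
open MeasureTheory ProbabilityTheory

noncomputable section

variable {Ω : Type*} [MeasurableSpace Ω]

open Filter Topology

private lemma integrable_dirac'' {f : ℝ → ℝ} (c : ℝ) :
    Integrable f (Measure.dirac c) := by
  refine (integrable_const (f c)).congr ?_
  rw [MeasureTheory.ae_dirac_eq, Filter.EventuallyEq, Filter.eventually_pure]


private lemma integral_two_point (f : ℝ → ℝ) {p : ℝ} (hp0 : 0 ≤ p) (hp1 : p ≤ 1)
    (c d : ℝ) :
    ∫ y, f y ∂(ENNReal.ofReal p • Measure.dirac c + ENNReal.ofReal (1 - p) • Measure.dirac d)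
      = p * f c + (1 - p) * f d := by
  rw [integral_add_measure ((integrable_dirac'' c).smul_measure ENNReal.ofReal_ne_top)
      ((integrable_dirac'' d).smul_measure ENNReal.ofReal_ne_top),
    integral_smul_measure, integral_smul_measure, integral_dirac, integral_dirac,
    ENNReal.toReal_ofReal hp0, ENNReal.toReal_ofReal (by linarith), smul_eq_mul, smul_eq_mul]


private lemma le_zero_of_sSup_nonneg {h : ℝ → ℝ} (hm : Monotone h)
    (hlc : ∀ x, ContinuousWithinAt h (Set.Iic x) x)
    (hne : {x | h x < 0}.Nonempty) (hbdd : BddAbove {x | h x < 0})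
    (hs : 0 ≤ sSup {x | h x < 0}) : h 0 ≤ 0 := by
  set s := sSup {x | h x < 0} with hsdef
  obtain ⟨u, hu_mono, hu_tend, hu_mem⟩ := exists_seq_tendsto_sSup hne hbdd
  have hle : ∀ n, u n ≤ s := fun n => le_csSup hbdd (hu_mem n)
  have htend : Tendsto u atTop (𝓝[Set.Iic s] s) :=
    tendsto_nhdsWithin_iff.mpr ⟨hu_tend, Filter.Eventually.of_forall hle⟩
  have : Tendsto (h ∘ u) atTop (𝓝 (h s)) := (hlc s).tendsto.comp htend
  have hhs : h s ≤ 0 := le_of_tendsto this (Filter.Eventually.of_forall fun n => (hu_mem n).le)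
  exact le_trans (hm hs) hhs


private lemma key_step
    (𝓕 : Set (Measure ℝ))
    (hconv : ∀ G₁ ∈ 𝓕, ∀ G₂ ∈ 𝓕, ∀ p : ℝ, 0 ≤ p → p ≤ 1 →
      ENNReal.ofReal p • G₁ + ENNReal.ofReal (1 - p) • G₂ ∈ 𝓕)
    (hdirac : ∀ y : ℝ, Measure.dirac y ∈ 𝓕)
    (v v' : ℝ → ℝ)
    (hv : Monotone v)
    (hv' : Monotone v') (hv'lc : ∀ x : ℝ, ContinuousWithinAt v' (Set.Iic x) x)
    {r : ℝ} (hvr : 0 < v r)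
    {r' : ℝ} (hv'r : 0 < v' r') {s' : ℝ} (hv's : v' s' < 0)
    (hsame : ∀ G ∈ 𝓕, Tminus (fun x y => v (x - y)) G = Tminus (fun x y => v' (x - y)) G)
    (a b p : ℝ) (hp0 : 0 ≤ p) (hp1 : p ≤ 1)
    (hF : p * v a + (1 - p) * v b < 0) :
    p * v' a + (1 - p) * v' b ≤ 0 := by
  set G : Measure ℝ := ENNReal.ofReal p • Measure.dirac (-a) + ENNReal.ofReal (1 - p) • Measure.dirac (-b)
    with hGdef
  have hGF : G ∈ 𝓕 := hconv _ (hdirac (-a)) _ (hdirac (-b)) p hp0 hp1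
  have hintv : ∀ x : ℝ, ∫ y, v (x - y) ∂G = p * v (x + a) + (1 - p) * v (x + b) := by
    intro x
    have := integral_two_point (fun y => v (x - y)) hp0 hp1 (-a) (-b)
    simpa [sub_neg_eq_add] using this
  have hintv' : ∀ x : ℝ, ∫ y, v' (x - y) ∂G = p * v' (x + a) + (1 - p) * v' (x + b) := by
    intro x
    have := integral_two_point (fun y => v' (x - y)) hp0 hp1 (-a) (-b)
    simpa [sub_neg_eq_add] using this
  set fp : ℝ → ℝ := fun x => p * v (x + a) + (1 - p) * v (x + b) with hfp
  set gp : ℝ → ℝ := fun x => p * v' (x + a) + (1 - p) * v' (x + b) with hgp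
  have hfpm : Monotone fp := by
    intro x y hxy
    have h1 := hv (show x + a ≤ y + a by linarith)
    have h2 := hv (show x + b ≤ y + b by linarith)
    simp only [hfp]; nlinarith
  have hgpm : Monotone gp := by
    intro x y hxy
    have h1 := hv' (show x + a ≤ y + a by linarith)
    have h2 := hv' (show x + b ≤ y + b by linarith)
    simp only [hgp]; nlinarith
  -- left continuity of gp
  have hgplc : ∀ x, ContinuousWithinAt gp (Set.Iic x) x := by
    intro x
    have h1 : ContinuousWithinAt (fun x => v' (x + a)) (Set.Iic x) x := by
      refine ContinuousWithinAt.comp (g := v') (f := fun t : ℝ => t + a)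
        (hv'lc (x + a)) ((continuous_id.add continuous_const).continuousWithinAt) ?_
      intro t ht
      simpa using add_le_add_right (Set.mem_Iic.mp ht) a
    have h2 : ContinuousWithinAt (fun x => v' (x + b)) (Set.Iic x) x := by
      refine ContinuousWithinAt.comp (g := v') (f := fun t : ℝ => t + b)
        (hv'lc (x + b)) ((continuous_id.add continuous_const).continuousWithinAt) ?_
      intro t ht
      simpa using add_le_add_right (Set.mem_Iic.mp ht) b
    exact (continuousWithinAt_const.mul h1).add (continuousWithinAt_const.mul h2)
  -- bounded above: fp is eventually positive
  have hfp_bdd : BddAbove {x | fp x < 0} := by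
    refine ⟨max (r - a) (r - b), fun x hx => ?_⟩
    by_contra hcon
    push_neg at hcon
    have h1 := hv (show r ≤ x + a by have := le_max_left (r - a) (r - b); linarith)
    have h2 := hv (show r ≤ x + b by have := le_max_right (r - a) (r - b); linarith)
    have : 0 < fp x := by simp only [hfp]; nlinarith
    exact absurd hx (by simp; linarith)
  have hgp_bdd : BddAbove {x | gp x < 0} := by
    refine ⟨max (r' - a) (r' - b), fun x hx => ?_⟩
    by_contra hcon
    push_neg at hcon
    have h1 := hv' (show r' ≤ x + a by have := le_max_left (r' - a) (r' - b); linarith)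
    have h2 := hv' (show r' ≤ x + b by have := le_max_right (r' - a) (r' - b); linarith)
    have : 0 < gp x := by simp only [hgp]; nlinarith
    exact absurd hx (by simp; linarith)
  have hgp_ne : {x | gp x < 0}.Nonempty := by
    refine ⟨min (s' - a) (s' - b), ?_⟩
    have h1 := hv' (show min (s' - a) (s' - b) + a ≤ s' by
      have := min_le_left (s' - a) (s' - b); linarith)
    have h2 := hv' (show min (s' - a) (s' - b) + b ≤ s' by
      have := min_le_right (s' - a) (s' - b); linarith)
    simp only [Set.mem_setOf_eq, hgp]; nlinarith
  -- Tminus for v on G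
  have hTm_v : Tminus (fun x y => v (x - y)) G = sSup {x | fp x < 0} := by
    unfold Tminus
    congr 1
    ext x
    simp [hintv x, hfp]
  have hTm_v' : Tminus (fun x y => v' (x - y)) G = sSup {x | gp x < 0} := by
    unfold Tminus
    congr 1
    ext x
    simp [hintv' x, hgp]
  have h0mem : (0:ℝ) ∈ {x | fp x < 0} := by
    simp only [Set.mem_setOf_eq, hfp, zero_add]; exact hF
  have h0le : (0:ℝ) ≤ sSup {x | fp x < 0} := le_csSup hfp_bdd h0mem
  have h0le' : (0:ℝ) ≤ sSup {x | gp x < 0} := by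
    rw [← hTm_v', ← hsame G hGF, hTm_v]; exact h0le
  have := le_zero_of_sSup_nonneg hgpm hgplc hgp_ne hgp_bdd h0le'
  simpa [hgp, zero_add] using this

private lemma ratio_eq (v v' : ℝ → ℝ)
    (K1 : ∀ a b p : ℝ, 0 ≤ p → p ≤ 1 → p * v a + (1 - p) * v b < 0 →
      p * v' a + (1 - p) * v' b ≤ 0)
    (K2 : ∀ a b p : ℝ, 0 ≤ p → p ≤ 1 → p * v' a + (1 - p) * v' b < 0 →
      p * v a + (1 - p) * v b ≤ 0)
    {a b : ℝ} (ha : v a < 0) (hb : 0 < v b) : v b * v' a = v a * v' b := by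
  have hden : 0 < v b - v a := by linarith
  obtain ⟨q, hq0, hq1, hFq⟩ : ∃ q : ℝ, 0 < q ∧ q < 1 ∧ q * v a + (1 - q) * v b = 0 := by
    refine ⟨v b / (v b - v a), div_pos hb hden, ?_, ?_⟩
    · rw [div_lt_one hden]; linarith
    · field_simp; ring
  set d : ℝ := v' a - v' b with hd
  have habs : 0 ≤ |d| := abs_nonneg d
  have hGq : q * v' a + (1 - q) * v' b = 0 := by
    rcases lt_trichotomy (q * v' a + (1 - q) * v' b) 0 with hneg | hzero | hpos
    · exfalso
      set δ : ℝ := -(q * v' a + (1 - q) * v' b) with hδ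
      have hδpos : 0 < δ := by simp only [hδ]; linarith
      have hstep : 0 < δ / (2 * (|d| + 1)) := by positivity
      set p : ℝ := max 0 (q - δ / (2 * (|d| + 1))) with hp
      have hp0 : 0 ≤ p := le_max_left _ _
      have hpq : p < q := max_lt hq0 (by linarith)
      have hp1 : p ≤ 1 := max_le (by linarith) (by linarith)
      have hqp : q - p ≤ δ / (2 * (|d| + 1)) := by
        have h := le_max_right 0 (q - δ / (2 * (|d| + 1)))
        rw [← hp] at h; linarith
      have hexp : p * v' a + (1 - p) * v' b = -δ - (q - p) * d := by
        simp only [hδ, hd]; ring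
      have h1 : -((q - p) * d) ≤ (q - p) * |d| := by nlinarith [neg_abs_le d]
      have h2 : (q - p) * |d| ≤ δ / (2 * (|d| + 1)) * |d| :=
        mul_le_mul_of_nonneg_right hqp habs
      have h3 : δ / (2 * (|d| + 1)) * |d| < δ := by
        rw [div_mul_eq_mul_div, div_lt_iff₀ (by positivity)]
        nlinarith
      have hGp : p * v' a + (1 - p) * v' b < 0 := by
        rw [hexp]; linarith
      have hle := K2 a b p hp0 hp1 hGp
      have hFp : p * v a + (1 - p) * v b = (q - p) * (v b - v a) := by
        linear_combination hFq
      have : 0 < (q - p) * (v b - v a) := mul_pos (by linarith) hden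
      linarith
    · exact hzero
    · exfalso
      set δ : ℝ := q * v' a + (1 - q) * v' b with hδ
      have hδpos : 0 < δ := hpos
      have hstep : 0 < δ / (2 * (|d| + 1)) := by positivity
      set p : ℝ := min 1 (q + δ / (2 * (|d| + 1))) with hp
      have hp1 : p ≤ 1 := min_le_left _ _
      have hpq : q < p := lt_min (by linarith) (by linarith)
      have hp0 : 0 ≤ p := by linarith
      have hqp : p - q ≤ δ / (2 * (|d| + 1)) := by
        have h := min_le_right 1 (q + δ / (2 * (|d| + 1)))
        rw [← hp] at h; linarith
      have hFp : p * v a + (1 - p) * v b < 0 := by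
        have hexp : p * v a + (1 - p) * v b = -((p - q) * (v b - v a)) := by
          linear_combination hFq
        rw [hexp]
        have : 0 < (p - q) * (v b - v a) := mul_pos (by linarith) hden
        linarith
      have hG := K1 a b p hp0 hp1 hFp
      have hexp : p * v' a + (1 - p) * v' b = δ + (p - q) * d := by
        simp only [hδ, hd]; ring
      have h1 : -((p - q) * |d|) ≤ (p - q) * d := by nlinarith [neg_abs_le d]
      have h2 : (p - q) * |d| ≤ δ / (2 * (|d| + 1)) * |d| :=
        mul_le_mul_of_nonneg_right hqp habs
      have h3 : δ / (2 * (|d| + 1)) * |d| < δ := by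
        rw [div_mul_eq_mul_div, div_lt_iff₀ (by positivity)]
        nlinarith
      rw [hexp] at hG
      linarith
  have hkey : q * (v a * v' b - v b * v' a) = 0 := by
    linear_combination v' b * hFq - v b * hGq
  have := mul_eq_zero.mp hkey
  rcases this with h | h
  · exact absurd h (ne_of_gt hq0)
  · linarith

/-- **Theorem (Statement 17).** On a convex class of probability measures containing all
Dirac measures, an identification function of prediction error form that induces a given
functional is unique up to multiplication by a positive constant. -/
theorem identification_function_unique_up_to_positive_constant
    (𝓕 : Set (Measure ℝ))
    (hprob : ∀ G ∈ 𝓕, IsProbabilityMeasure G)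
    (hconv : ∀ G₁ ∈ 𝓕, ∀ G₂ ∈ 𝓕, ∀ p : ℝ, 0 ≤ p → p ≤ 1 →
      ENNReal.ofReal p • G₁ + ENNReal.ofReal (1 - p) • G₂ ∈ 𝓕)
    (hdirac : ∀ y : ℝ, Measure.dirac y ∈ 𝓕)
    (v v' : ℝ → ℝ)
    (hv : Monotone v) (hvlc : ∀ x : ℝ, ContinuousWithinAt v (Set.Iic x) x)
    (hvsign : ∃ r : ℝ, 0 < r ∧ v (-r) < 0 ∧ 0 < v r)
    (hv' : Monotone v') (hv'lc : ∀ x : ℝ, ContinuousWithinAt v' (Set.Iic x) x)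
    (hv'sign : ∃ r : ℝ, 0 < r ∧ v' (-r) < 0 ∧ 0 < v' r)
    (hvint : ∀ G ∈ 𝓕, ∀ x : ℝ, Integrable (fun y => v (x - y)) G)
    (hv'int : ∀ G ∈ 𝓕, ∀ x : ℝ, Integrable (fun y => v' (x - y)) G)
    -- both identification functions induce the same functional on `𝓕`:
    (hsame : ∀ G ∈ 𝓕,
      Tminus (fun x y => v (x - y)) G = Tminus (fun x y => v' (x - y)) G ∧
      Tplus (fun x y => v (x - y)) G = Tplus (fun x y => v' (x - y)) G) :
    ∃ c : ℝ, 0 < c ∧ ∀ r : ℝ, v' r = c * v r := by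
  obtain ⟨r, hr, hvneg, hvpos⟩ := hvsign
  obtain ⟨r', hr', hv'neg, hv'pos⟩ := hv'sign
  have K1 : ∀ a b p : ℝ, 0 ≤ p → p ≤ 1 → p * v a + (1 - p) * v b < 0 →
      p * v' a + (1 - p) * v' b ≤ 0 :=
    fun a b p hp0 hp1 hF => key_step 𝓕 hconv hdirac v v' hv hv' hv'lc hvpos hv'pos hv'neg
      (fun G hG => (hsame G hG).1) a b p hp0 hp1 hF
  have K2 : ∀ a b p : ℝ, 0 ≤ p → p ≤ 1 → p * v' a + (1 - p) * v' b < 0 →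
      p * v a + (1 - p) * v b ≤ 0 :=
    fun a b p hp0 hp1 hF => key_step 𝓕 hconv hdirac v' v hv' hv hvlc hv'pos hvpos hvneg
      (fun G hG => ((hsame G hG).1).symm) a b p hp0 hp1 hF
  -- v' r > 0
  have hv'r_nonneg : 0 ≤ v' r := by
    by_contra hcon
    push_neg at hcon
    have := K2 r r 1 (by norm_num) (by norm_num) (by norm_num; linarith)
    norm_num at this
    linarith
  have hv'r_pos : 0 < v' r := by
    rcases lt_or_eq_of_le hv'r_nonneg with h | h
    · exact h
    · exfalso
      set M : ℝ := |v (-r')| with hM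
      have hMd : -M ≤ v (-r') := neg_abs_le _
      have hM0 : 0 ≤ M := abs_nonneg _
      set p : ℝ := v r / (v r + M + 1) with hp
      have hp0 : 0 < p := by positivity
      have hp1 : p < 1 := by rw [hp, div_lt_one (by linarith)]; linarith
      have hpe : p * (v r + M + 1) = v r := by
        rw [hp]; field_simp
      have hG : p * v' (-r') + (1 - p) * v' r < 0 := by
        rw [← h]
        have : p * v' (-r') < 0 := mul_neg_of_pos_of_neg hp0 hv'neg
        linarith
      have hF := K2 (-r') r p hp0.le hp1.le hG
      nlinarith
  -- v' (-r) < 0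
  have hv'mr_nonpos : v' (-r) ≤ 0 := by
    have := K1 (-r) (-r) 1 (by norm_num) (by norm_num) (by norm_num; linarith)
    norm_num at this
    linarith
  have hv'mr_neg : v' (-r) < 0 := by
    rcases lt_or_eq_of_le hv'mr_nonpos with h | h
    · exact h
    · exfalso
      set N : ℝ := -v (-r) with hN
      have hN0 : 0 < N := by simp only [hN]; linarith
      set M : ℝ := |v r'| with hM
      have hMd : v r' ≤ M := le_abs_self _
      have hM0 : 0 ≤ M := abs_nonneg _
      set p : ℝ := N / (N + M + 1) with hp
      have hp0 : 0 < p := by positivity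
      have hp1 : p < 1 := by rw [hp, div_lt_one (by linarith)]; linarith
      have hpe : p * (N + M + 1) = N := by rw [hp]; field_simp
      have hF : p * v r' + (1 - p) * v (-r) < 0 := by nlinarith
      have hG := K1 r' (-r) p hp0.le hp1.le hF
      rw [h] at hG
      nlinarith
  refine ⟨v' r / v r, div_pos hv'r_pos hvpos, fun x => ?_⟩
  have hvrne : v r ≠ 0 := ne_of_gt hvpos
  have e2 : v r * v' (-r) = v (-r) * v' r := ratio_eq v v' K1 K2 hvneg hvpos
  rcases lt_trichotomy (v x) 0 with hx | hx | hx
  · have e1 : v r * v' x = v x * v' r := ratio_eq v v' K1 K2 hx hvpos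
    rw [div_mul_eq_mul_div, eq_div_iff hvrne]
    linarith [e1]
  · have hv'x : v' x = 0 := by
      by_contra hne
      rcases lt_or_gt_of_ne hne with h | h
      · have := ratio_eq v' v K2 K1 h hv'r_pos
        rw [hx] at this
        nlinarith
      · have := ratio_eq v' v K2 K1 hv'mr_neg h
        rw [hx] at this
        nlinarith
    rw [hv'x, hx, mul_zero]
  · have e1 : v x * v' (-r) = v (-r) * v' x := ratio_eq v v' K1 K2 hvneg hx
    rw [div_mul_eq_mul_div, eq_div_iff hvrne]
    have h : v (-r) * (v' x * v r) = v (-r) * (v' r * v x) := by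
      linear_combination v x * e2 - v r * e1
    exact mul_left_cancel₀ (ne_of_lt hvneg) h

end
end

section
/- In a prediction space, if the predictive distribution F is probabilistically calibrated, then for every α ∈ (0,1) the induced quantile forecasts are unconditionally calibrated: Q(Y ≤ q_α^-(F)) ≥ α and Q(Y ≥ q_α^+(F)) ≥ 1 − α. -/
open MeasureTheory ProbabilityTheory

noncomputable section

variable {Ω : Type*} [MeasurableSpace Ω]

lemma cdfLt_le_cdfAt' (G : Measure ℝ) [IsProbabilityMeasure G] (y : ℝ) :
    cdfLt G y ≤ cdfAt G y :=
  ENNReal.toReal_mono (measure_ne_top G _) (measure_mono Set.Iio_subset_Iic_self)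

lemma cdfAt_le_cdfLt_of_lt' (G : Measure ℝ) [IsProbabilityMeasure G] {x y : ℝ} (h : x < y) :
    cdfAt G x ≤ cdfLt G y :=
  ENNReal.toReal_mono (measure_ne_top G _)
    (measure_mono fun _ hz => lt_of_le_of_lt hz h)

lemma exists_cdfAt_ge' (G : Measure ℝ) [IsProbabilityMeasure G] {α : ℝ} (hα : α < 1) :
    ∃ x, α ≤ cdfAt G x := by
  have h := ProbabilityTheory.tendsto_cdf_atTop G
  have h2 : ∀ᶠ x in Filter.atTop, α ≤ ProbabilityTheory.cdf G x :=
    h.eventually (eventually_ge_nhds hα)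
  obtain ⟨x, hx⟩ := h2.exists
  exact ⟨x, by rwa [ProbabilityTheory.cdf_eq_real, measureReal_def] at hx⟩

lemma exists_cdfLt_le' (G : Measure ℝ) [IsProbabilityMeasure G] {α : ℝ} (hα : 0 < α) :
    ∃ x, cdfLt G x ≤ α := by
  have h := ProbabilityTheory.tendsto_cdf_atBot G
  have h2 : ∀ᶠ x in Filter.atBot, ProbabilityTheory.cdf G x ≤ α :=
    h.eventually (eventually_le_nhds hα)
  obtain ⟨x, hx⟩ := h2.exists
  rw [ProbabilityTheory.cdf_eq_real, measureReal_def] at hx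
  exact ⟨x, le_trans (cdfLt_le_cdfAt' G x) hx⟩

/-- **Theorem (Statement 18).** In a prediction space, probabilistic calibration implies
unconditional quantile calibration at every level `α ∈ (0,1)`:
`Q(Y ≤ q_α^-(F)) ≥ α` and `Q(Y ≥ q_α^+(F)) ≥ 1 − α`. -/
theorem prob_calibration_implies_uncond_quantile_calibration
    {Ω : Type*} [MeasurableSpace Ω] (μ : Measure Ω) (F : Ω → Measure ℝ) (Y U : Ω → ℝ)
    (hps : IsPredictionSpace μ F Y U)
    (hpc : ProbCalibrated μ F Y U) :
    ∀ α ∈ Set.Ioo (0:ℝ) 1,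
      α ≤ (μ {ω | Y ω ≤ lowerQuantile (F ω) α}).toReal ∧
      1 - α ≤ (μ {ω | upperQuantile (F ω) α ≤ Y ω}).toReal := by
  intro α hα
  obtain ⟨hα0, hα1⟩ := hα
  haveI := hps.isProb
  set Z := PIT F Y U with hZdef
  have hZae : AEMeasurable Z μ := by
    by_contra h
    rw [ProbCalibrated, Measure.map_of_not_aemeasurable h] at hpc
    have h0 : (0 : Measure ℝ) Set.univ = unif01 Set.univ := by rw [hpc]
    simp [unif01, Real.volume_Icc, Measure.restrict_apply MeasurableSet.univ] at h0
  have hU : μ (U ⁻¹' Set.Icc (0:ℝ) 1)ᶜ = 0 := by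
    have h1 : μ (U ⁻¹' Set.Icc (0:ℝ) 1) = 1 := by
      rw [← Measure.map_apply hps.measU measurableSet_Icc, hps.unifU]
      simp [unif01, Measure.restrict_apply measurableSet_Icc, Real.volume_Icc]
    rw [measure_compl (hps.measU measurableSet_Icc) (measure_ne_top μ _), h1,
      measure_univ, tsub_self]
  constructor
  · -- first inequality
    have hsub : Z ⁻¹' Set.Iio α ∩ U ⁻¹' Set.Icc (0:ℝ) 1
        ⊆ {ω | Y ω ≤ lowerQuantile (F ω) α} := by
      rintro ω ⟨hZω, hU0, hU1⟩
      haveI := hps.probF ω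
      have hd : 0 ≤ cdfAt (F ω) (Y ω) - cdfLt (F ω) (Y ω) :=
        sub_nonneg.2 (cdfLt_le_cdfAt' _ _)
      have hlt : cdfLt (F ω) (Y ω) < α :=
        lt_of_le_of_lt (le_add_of_nonneg_right (mul_nonneg hU0 hd)) hZω
      refine le_csInf (exists_cdfAt_ge' (F ω) hα1) fun x hx => ?_
      by_contra hxy
      push_neg at hxy
      exact absurd (le_trans hx (cdfAt_le_cdfLt_of_lt' _ hxy)) (not_le.2 hlt)
    have hmap : μ (Z ⁻¹' Set.Iio α) = ENNReal.ofReal α := by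
      rw [← Measure.map_apply_of_aemeasurable hZae measurableSet_Iio, hpc]
      have hset : Set.Iio α ∩ Set.Icc (0:ℝ) 1 = Set.Ico 0 α := by
        ext x
        constructor
        · rintro ⟨h1, h2, h3⟩; exact ⟨h2, h1⟩
        · rintro ⟨h1, h2⟩; exact ⟨h2, h1, le_of_lt (lt_trans h2 hα1)⟩
      rw [unif01, Measure.restrict_apply measurableSet_Iio, hset, Real.volume_Ico, sub_zero]
    have hle : ENNReal.ofReal α ≤ μ {ω | Y ω ≤ lowerQuantile (F ω) α} := by
      rw [← hmap, ← measure_inter_conull (s := Z ⁻¹' Set.Iio α) hU]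
      exact measure_mono hsub
    exact (ENNReal.ofReal_le_iff_le_toReal (measure_ne_top μ _)).1 hle
  · have hsub : Z ⁻¹' Set.Ioi α ∩ U ⁻¹' Set.Icc (0:ℝ) 1
        ⊆ {ω | upperQuantile (F ω) α ≤ Y ω} := by
      rintro ω ⟨hZω, hU0, hU1⟩
      haveI := hps.probF ω
      have hd : 0 ≤ cdfAt (F ω) (Y ω) - cdfLt (F ω) (Y ω) :=
        sub_nonneg.2 (cdfLt_le_cdfAt' _ _)
      have hgt : α < cdfAt (F ω) (Y ω) := by
        refine lt_of_lt_of_le hZω ?_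
        have : U ω * (cdfAt (F ω) (Y ω) - cdfLt (F ω) (Y ω))
            ≤ cdfAt (F ω) (Y ω) - cdfLt (F ω) (Y ω) := by
          nlinarith
        show cdfLt (F ω) (Y ω) + U ω * _ ≤ _
        linarith
      refine csSup_le (exists_cdfLt_le' (F ω) hα0) fun x hx => ?_
      by_contra hxy
      push_neg at hxy
      exact absurd (le_trans (cdfAt_le_cdfLt_of_lt' _ hxy) hx) (not_le.2 hgt)
    have hmap : μ (Z ⁻¹' Set.Ioi α) = ENNReal.ofReal (1 - α) := by
      rw [← Measure.map_apply_of_aemeasurable hZae measurableSet_Ioi, hpc]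
      have hset : Set.Ioi α ∩ Set.Icc (0:ℝ) 1 = Set.Ioc α 1 := by
        ext x
        constructor
        · rintro ⟨h1, h2, h3⟩; exact ⟨h1, h3⟩
        · rintro ⟨h1, h2⟩; exact ⟨h1, le_of_lt (lt_trans hα0 h1), h2⟩
      rw [unif01, Measure.restrict_apply measurableSet_Ioi, hset, Real.volume_Ioc]
    have hle : ENNReal.ofReal (1 - α) ≤ μ {ω | upperQuantile (F ω) α ≤ Y ω} := by
      rw [← hmap, ← measure_inter_conull (s := Z ⁻¹' Set.Ioi α) hU]
      exact measure_mono hsub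
    exact (ENNReal.ofReal_le_iff_le_toReal (measure_ne_top μ _)).1 hle


end
end
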